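/- Let ε > 0, let E : ℝ² → ℝ² be C¹, let g : ℝ² → ℝ be C¹ and compactly supported, and let x ∈ ℝ². Then ∫_{ℝ²} E(x − ε v^⊥) · ∇g(v) dv = ε ∫_{ℝ²} (∂₂E₁ − ∂₁E₂)(x − ε v^⊥) g(v) dv. -/

import Mathlib

open MeasureTheory

noncomputable abbrev R2 : Type := EuclideanSpace ℝ (Fin 2)

/-- For `w = (w₁, w₂) ∈ ℝ²`, `perp w = (−w₂, w₁)`. -/
noncomputable def perp (w : R2) : R2 := WithLp.toLp 2 ![-w 1, w 0]

noncomputable def perpL : R2 →L[ℝ] R2 :=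
  LinearMap.toContinuousLinearMap
  { toFun := perp
    map_add' := by
      intro w w'
      ext i
      fin_cases i <;> simp [perp] <;> ring
    map_smul' := by
      intro c w
      ext i
      fin_cases i <;> simp [perp] <;> ring }

lemma perpL_apply (w : R2) : perpL w = perp w := rfl

lemma perp_e0 : perp (EuclideanSpace.single (0 : Fin 2) (1:ℝ)) = EuclideanSpace.single 1 1 := by
  ext i
  fin_cases i <;> simp [perp, EuclideanSpace.single_apply]

lemma perp_e1 : perp (EuclideanSpace.single (1 : Fin 2) (1:ℝ))
    = -EuclideanSpace.single 0 1 := by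
  ext i
  fin_cases i <;> simp [perp, EuclideanSpace.single_apply]

lemma decomp (w : R2) : w = w 0 • EuclideanSpace.single (0:Fin 2) (1:ℝ)
    + w 1 • EuclideanSpace.single 1 1 := by
  ext i
  fin_cases i <;> simp [EuclideanSpace.single_apply]

/-- For a `C¹` field `E : ℝ² → ℝ²` and a `C¹` compactly supported `g : ℝ² → ℝ`,
`∫ E(x − εv^⊥)·∇g(v) dv = ε ∫ (∂₂E₁ − ∂₁E₂)(x − εv^⊥) g(v) dv`. -/
theorem integration_by_parts_gyro (ε : ℝ) (hε : 0 < ε)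
    (E : R2 → R2) (hE : ContDiff ℝ 1 E)
    (g : R2 → ℝ) (hg : ContDiff ℝ 1 g) (hgsupp : HasCompactSupport g)
    (x : R2) :
    ∫ v, fderiv ℝ g v (E (x - ε • perp v))
      = ε * ∫ v, (fderiv ℝ E (x - ε • perp v) (EuclideanSpace.single 1 1) 0
          - fderiv ℝ E (x - ε • perp v) (EuclideanSpace.single 0 1) 1) * g v := by
  classical
  set e0 : R2 := EuclideanSpace.single (0:Fin 2) (1:ℝ) with he0
  set e1 : R2 := EuclideanSpace.single (1:Fin 2) (1:ℝ) with he1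
  set a : R2 → R2 := fun v => x - ε • perp v with ha
  set A : R2 →L[ℝ] R2 := (-ε) • perpL with hA
  have haD : ∀ v, HasFDerivAt a A v := by
    intro v
    have h1 : HasFDerivAt (fun v : R2 => A v + x) A v :=
      (A.hasFDerivAt).add_const x
    convert h1 using 2 with w
    simp [ha, hA, perpL_apply, sub_eq_add_neg, add_comm, neg_smul]
  have ha_cont : Continuous a := by
    have : Continuous fun v : R2 => A v + x := (A.continuous).add continuous_const
    convert this using 1
    funext w
    simp [ha, hA, perpL_apply, sub_eq_add_neg, add_comm, neg_smul]
  set F : R2 → R2 := fun v => E (a v) with hF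
  have hED : Differentiable ℝ E := hE.differentiable one_ne_zero
  have hgD : Differentiable ℝ g := hg.differentiable one_ne_zero
  set D : R2 → (R2 →L[ℝ] R2) := fun v => fderiv ℝ E (a v) with hD
  have hFD : ∀ (i : Fin 2) v,
      HasFDerivAt (fun v => F v i) (((EuclideanSpace.proj i).comp (D v)).comp A) v := by
    intro i v
    exact ((EuclideanSpace.proj i).hasFDerivAt.comp _
      ((hED (a v)).hasFDerivAt.comp v (haD v)))
  have hF0' : ∀ v, fderiv ℝ (fun v => F v 0) v e0 = -ε * (D v e1 0) := by
    intro v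
    rw [(hFD 0 v).fderiv]
    have : A e0 = (-ε) • e1 := by
      simp [hA, perpL_apply, perp_e0, he0, he1]
    simp [this, ContinuousLinearMap.comp_apply, _root_.map_smul]
  have hF1' : ∀ v, fderiv ℝ (fun v => F v 1) v e1 = ε * (D v e0 1) := by
    intro v
    rw [(hFD 1 v).fderiv]
    have : A e1 = ε • e0 := by
      simp [hA, perpL_apply, perp_e1, he0, he1, neg_smul, smul_neg]
    simp [this, ContinuousLinearMap.comp_apply, _root_.map_smul]
  -- continuity facts
  have hF_cont : ∀ i : Fin 2, Continuous fun v => F v i := fun i =>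
    (EuclideanSpace.proj i).continuous.comp ((hE.continuous).comp ha_cont)
  have hD_cont : Continuous D := (hE.continuous_fderiv one_ne_zero).comp ha_cont
  have hDe : ∀ (u : R2) (i : Fin 2), Continuous fun v => D v u i := fun u i =>
    (EuclideanSpace.proj i).continuous.comp (hD_cont.clm_apply continuous_const)
  have hg'c : ∀ u : R2, Continuous fun v => fderiv ℝ g v u :=
    fun u => (hg.continuous_fderiv one_ne_zero).clm_apply continuous_const
  -- integrability helper
  have key : ∀ h : R2 → ℝ, Continuous h → Integrable (fun v => h v * g v) := by
    intro h hc
    exact (hc.mul hg.continuous).integrable_of_hasCompactSupport (hgsupp.mul_left)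
  have key' : ∀ (h : R2 → ℝ) (u : R2), Continuous h →
      Integrable (fun v => h v * fderiv ℝ g v u) := by
    intro h u hc
    exact ((hc.mul (hg'c u)).integrable_of_hasCompactSupport
      ((hgsupp.fderiv_apply ℝ u).mul_left))
  -- integration by parts, component 0
  have I0 : ∫ v, F v 0 * fderiv ℝ g v e0
      = -∫ v, fderiv ℝ (fun v => F v 0) v e0 * g v := by
    apply integral_mul_fderiv_eq_neg_fderiv_mul_of_integrable
    · apply key
      have : (fun v => fderiv ℝ (fun v => F v 0) v e0) = fun v => -ε * (D v e1 0) := by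
        funext v; exact hF0' v
      rw [this]
      exact (continuous_const.mul (hDe e1 0))
    · exact key' _ e0 (hF_cont 0)
    · exact key _ (hF_cont 0)
    · exact fun v _ => (hFD 0 v).differentiableAt
    · exact fun v _ => hgD v
  have I1 : ∫ v, F v 1 * fderiv ℝ g v e1
      = -∫ v, fderiv ℝ (fun v => F v 1) v e1 * g v := by
    apply integral_mul_fderiv_eq_neg_fderiv_mul_of_integrable
    · apply key
      have : (fun v => fderiv ℝ (fun v => F v 1) v e1) = fun v => ε * (D v e0 1) := by
        funext v; exact hF1' v
      rw [this]
      exact (continuous_const.mul (hDe e0 1))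
    · exact key' _ e1 (hF_cont 1)
    · exact key _ (hF_cont 1)
    · exact fun v _ => (hFD 1 v).differentiableAt
    · exact fun v _ => hgD v
  -- decompose LHS
  have lhs_eq : ∀ v, fderiv ℝ g v (E (x - ε • perp v))
      = F v 0 * fderiv ℝ g v e0 + F v 1 * fderiv ℝ g v e1 := by
    intro v
    have : E (x - ε • perp v) = F v := rfl
    rw [this, decomp (F v)]
    simp [map_add, _root_.map_smul, smul_eq_mul, he0, he1]
  calc ∫ v, fderiv ℝ g v (E (x - ε • perp v))
      = ∫ v, (F v 0 * fderiv ℝ g v e0 + F v 1 * fderiv ℝ g v e1) := by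
        exact integral_congr_ae (Filter.Eventually.of_forall lhs_eq)
    _ = (∫ v, F v 0 * fderiv ℝ g v e0) + ∫ v, F v 1 * fderiv ℝ g v e1 :=
        integral_add (key' _ e0 (hF_cont 0)) (key' _ e1 (hF_cont 1))
    _ = (-∫ v, fderiv ℝ (fun v => F v 0) v e0 * g v)
        + -∫ v, fderiv ℝ (fun v => F v 1) v e1 * g v := by rw [I0, I1]
    _ = ε * ∫ v, (D v e1 0 - D v e0 1) * g v := by
        have h0 : (fun v => fderiv ℝ (fun v => F v 0) v e0 * g v)
            = fun v => (-ε * (D v e1 0)) * g v := by funext v; rw [hF0' v]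
        have h1 : (fun v => fderiv ℝ (fun v => F v 1) v e1 * g v)
            = fun v => (ε * (D v e0 1)) * g v := by funext v; rw [hF1' v]
        rw [h0, h1, ← integral_const_mul]
        have hrw : (fun v => ε * ((D v e1 0 - D v e0 1) * g v))
            = fun v => (-((-ε * (D v e1 0)) * g v)) + (-((ε * (D v e0 1)) * g v)) := by
          funext v; ring
        have int0 : Integrable (fun v => -((-ε * (D v e1 0)) * g v)) volume :=
          (key _ (continuous_const.mul (hDe e1 0))).neg
        have int1 : Integrable (fun v => -((ε * (D v e0 1)) * g v)) volume :=
          (key _ (continuous_const.mul (hDe e0 1))).neg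
        rw [hrw, integral_add int0 int1, integral_neg, integral_neg]
    _ = ε * ∫ v, (fderiv ℝ E (x - ε • perp v) (EuclideanSpace.single 1 1) 0
          - fderiv ℝ E (x - ε • perp v) (EuclideanSpace.single 0 1) 1) * g v := rfl
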